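/- Let F⁺, F⁻ : ℝ → ℝ be bounded nondecreasing functions and set f = F⁺ − F⁻. Let φ : ℝ → ℝ be continuous, nonnegative, equal to 0 outside [−1, 1], and with ∫_ℝ φ = 1; for δ > 0 set φ_δ(t) = δ⁻¹ φ(t/δ). For each integer n ≥ 1 define h̄_n(x) = ∫_ℝ F⁺(x + 1/n − y) φ_{1/n}(y) dy − ∫_ℝ F⁻(x − 1/n − y) φ_{1/n}(y) dy. Then: (i) each h̄_n is continuous on ℝ; (ii) h̄_n(x) ≥ f(x) for every x and n; (iii) h̄_n(x) ≥ h̄_{n+1}(x) for every x and n; (iv) if F⁺ and F⁻ are both continuous at a point x, then h̄_n(x) → f(x) as n → ∞; (v) if F⁺ is constant on [x, x + 2/n] and F⁻ is constant on [x − 2/n, x], then h̄_n(x) = f(x); (vi) for a < b: if F⁻ is constant on [a, b) and a + 2/n ≤ b, then h̄_n is monotone nondecreasing on [a + 2/n, b]; if F⁺ is constant on (a, b] and a ≤ b − 2/n, then h̄_n is monotone nonincreasing on [a, b − 2/n]. -/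

import Mathlib

open Filter Set MeasureTheory

section Aux

variable {φ F : ℝ → ℝ}

private lemma phi_zero_outside (hφc : Continuous φ)
    (hφsupp : ∀ t : ℝ, t ∉ Set.Icc (-1 : ℝ) 1 → φ t = 0) :
    ∀ t : ℝ, t ∉ Set.Ioo (-1 : ℝ) 1 → φ t = 0 := fun t ht => by
  have h1 : (Set.Ioo (-1 : ℝ) 1)ᶜ ⊆ φ ⁻¹' {0} := by
    rw [← interior_Icc, ← closure_compl]
    exact closure_minimal (fun s hs => hφsupp s hs) (isClosed_singleton.preimage hφc)
  exact h1 ht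

private lemma phi_integrable (hφc : Continuous φ)
    (hφsupp : ∀ t : ℝ, t ∉ Set.Icc (-1 : ℝ) 1 → φ t = 0) : Integrable φ :=
  hφc.integrable_of_hasCompactSupport (HasCompactSupport.intro isCompact_Icc hφsupp)

private lemma integrand_integrable (hφc : Continuous φ)
    (hφsupp : ∀ t : ℝ, t ∉ Set.Icc (-1 : ℝ) 1 → φ t = 0)
    (hF : Monotone F) (hFbd : ∃ C : ℝ, ∀ x : ℝ, |F x| ≤ C)
    {g : ℝ → ℝ} (hg : Measurable g) :
    Integrable (fun z : ℝ => F (g z) * φ z) := by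
  obtain ⟨C, hC⟩ := hFbd
  exact (phi_integrable hφc hφsupp).bdd_mul
    ((hF.measurable.comp hg).aestronglyMeasurable)
    (c := C) (Filter.Eventually.of_forall fun z => by simpa [Real.norm_eq_abs] using hC (g z))

/-- Change of variables `z = n y`. -/
private lemma moll_change (F : ℝ → ℝ) {n : ℕ} (hn : 1 ≤ n) (c : ℝ) :
    (∫ y : ℝ, F (c - y) * ((n : ℝ) * φ ((n : ℝ) * y)))
      = ∫ z : ℝ, F (c - z / (n : ℝ)) * φ z := by
  have hn0 : (n : ℝ) ≠ 0 := Nat.cast_ne_zero.mpr (by omega)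
  have hnpos : (0 : ℝ) < (n : ℝ) := Nat.cast_pos.mpr hn
  set g : ℝ → ℝ := fun z => F (c - z / (n : ℝ)) * φ z with hg
  have h1 : ∀ y : ℝ, F (c - y) * ((n : ℝ) * φ ((n : ℝ) * y)) = (n : ℝ) * g ((n : ℝ) * y) := by
    intro y
    simp only [hg]
    rw [mul_div_cancel_left₀ _ hn0]
    ring
  simp_rw [h1]
  rw [integral_const_mul, Measure.integral_comp_mul_left g (n : ℝ), smul_eq_mul,
    abs_of_pos (inv_pos.mpr hnpos), ← mul_assoc, mul_inv_cancel₀ hn0, one_mul]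

private lemma mollA_lower (hφc : Continuous φ) (hφ0 : ∀ t : ℝ, 0 ≤ φ t)
    (hφsupp : ∀ t : ℝ, t ∉ Set.Icc (-1 : ℝ) 1 → φ t = 0) (hφint : ∫ t : ℝ, φ t = 1)
    (hF : Monotone F) (hFbd : ∃ C : ℝ, ∀ x : ℝ, |F x| ≤ C)
    {n : ℕ} (hn : 1 ≤ n) (c : ℝ) :
    F (c - 1 / (n : ℝ)) ≤ ∫ z : ℝ, F (c - z / (n : ℝ)) * φ z := by
  have hnpos : (0 : ℝ) < (n : ℝ) := Nat.cast_pos.mpr hn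
  have h1 : F (c - 1 / (n : ℝ)) = ∫ z : ℝ, F (c - 1 / (n : ℝ)) * φ z := by
    rw [integral_const_mul, hφint, mul_one]
  rw [h1]
  refine integral_mono ((phi_integrable hφc hφsupp).const_mul _)
    (integrand_integrable hφc hφsupp hF hFbd ((measurable_id.div_const _).const_sub c)) ?_
  intro z
  by_cases hz : z ∈ Set.Icc (-1 : ℝ) 1
  · refine mul_le_mul_of_nonneg_right (hF ?_) (hφ0 z)
    have : z / (n : ℝ) ≤ 1 / (n : ℝ) := by
      rw [div_eq_mul_inv, div_eq_mul_inv]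
      exact mul_le_mul_of_nonneg_right hz.2 (by positivity)
    linarith
  · simp [hφsupp z hz]

private lemma mollA_upper (hφc : Continuous φ) (hφ0 : ∀ t : ℝ, 0 ≤ φ t)
    (hφsupp : ∀ t : ℝ, t ∉ Set.Icc (-1 : ℝ) 1 → φ t = 0) (hφint : ∫ t : ℝ, φ t = 1)
    (hF : Monotone F) (hFbd : ∃ C : ℝ, ∀ x : ℝ, |F x| ≤ C)
    {n : ℕ} (hn : 1 ≤ n) (c : ℝ) :
    (∫ z : ℝ, F (c - z / (n : ℝ)) * φ z) ≤ F (c + 1 / (n : ℝ)) := by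
  have hnpos : (0 : ℝ) < (n : ℝ) := Nat.cast_pos.mpr hn
  have h1 : F (c + 1 / (n : ℝ)) = ∫ z : ℝ, F (c + 1 / (n : ℝ)) * φ z := by
    rw [integral_const_mul, hφint, mul_one]
  rw [h1]
  refine integral_mono (integrand_integrable hφc hφsupp hF hFbd
    ((measurable_id.div_const _).const_sub c)) ((phi_integrable hφc hφsupp).const_mul _) ?_
  intro z
  by_cases hz : z ∈ Set.Icc (-1 : ℝ) 1
  · refine mul_le_mul_of_nonneg_right (hF ?_) (hφ0 z)
    have : (-1 : ℝ) / (n : ℝ) ≤ z / (n : ℝ) := by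
      rw [div_eq_mul_inv, div_eq_mul_inv]
      exact mul_le_mul_of_nonneg_right hz.1 (by positivity)
    have h2 : (-1 : ℝ) / (n : ℝ) = -(1 / (n : ℝ)) := by ring
    linarith [h2 ▸ this]
  · simp [hφsupp z hz]

private lemma mollA_mono (hφc : Continuous φ) (hφ0 : ∀ t : ℝ, 0 ≤ φ t)
    (hφsupp : ∀ t : ℝ, t ∉ Set.Icc (-1 : ℝ) 1 → φ t = 0)
    (hF : Monotone F) (hFbd : ∃ C : ℝ, ∀ x : ℝ, |F x| ≤ C)
    (n : ℕ) {c c' : ℝ} (hcc : c ≤ c') :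
    (∫ z : ℝ, F (c - z / (n : ℝ)) * φ z) ≤ ∫ z : ℝ, F (c' - z / (n : ℝ)) * φ z := by
  refine integral_mono (integrand_integrable hφc hφsupp hF hFbd
    ((measurable_id.div_const _).const_sub c))
    (integrand_integrable hφc hφsupp hF hFbd ((measurable_id.div_const _).const_sub c')) ?_
  intro z
  exact mul_le_mul_of_nonneg_right (hF (by linarith)) (hφ0 z)

private lemma mollA_anti_plus (hφc : Continuous φ) (hφ0 : ∀ t : ℝ, 0 ≤ φ t)
    (hφsupp : ∀ t : ℝ, t ∉ Set.Icc (-1 : ℝ) 1 → φ t = 0)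
    (hF : Monotone F) (hFbd : ∃ C : ℝ, ∀ x : ℝ, |F x| ≤ C)
    {n m : ℕ} (hn : 1 ≤ n) (hnm : n ≤ m) (x : ℝ) :
    (∫ z : ℝ, F (x + 1 / (m : ℝ) - z / (m : ℝ)) * φ z)
      ≤ ∫ z : ℝ, F (x + 1 / (n : ℝ) - z / (n : ℝ)) * φ z := by
  have hnpos : (0 : ℝ) < (n : ℝ) := Nat.cast_pos.mpr hn
  have hmpos : (0 : ℝ) < (m : ℝ) := Nat.cast_pos.mpr (le_trans hn hnm)
  have hnm' : (n : ℝ) ≤ (m : ℝ) := Nat.cast_le.mpr hnm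
  refine integral_mono (integrand_integrable hφc hφsupp hF hFbd
    ((measurable_id.div_const _).const_sub _)) (integrand_integrable hφc hφsupp hF hFbd
    ((measurable_id.div_const _).const_sub _)) ?_
  intro z
  by_cases hz : z ∈ Set.Icc (-1 : ℝ) 1
  · refine mul_le_mul_of_nonneg_right (hF ?_) (hφ0 z)
    have e1 : x + 1 / (m : ℝ) - z / (m : ℝ) = x + (1 - z) / (m : ℝ) := by ring
    have e2 : x + 1 / (n : ℝ) - z / (n : ℝ) = x + (1 - z) / (n : ℝ) := by ring
    rw [e1, e2]
    have h1z : (0 : ℝ) ≤ 1 - z := by linarith [hz.2]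
    have : (1 - z) / (m : ℝ) ≤ (1 - z) / (n : ℝ) :=
      div_le_div_of_nonneg_left h1z hnpos hnm'
    linarith
  · simp [hφsupp z hz]

private lemma mollA_anti_minus (hφc : Continuous φ) (hφ0 : ∀ t : ℝ, 0 ≤ φ t)
    (hφsupp : ∀ t : ℝ, t ∉ Set.Icc (-1 : ℝ) 1 → φ t = 0)
    (hF : Monotone F) (hFbd : ∃ C : ℝ, ∀ x : ℝ, |F x| ≤ C)
    {n m : ℕ} (hn : 1 ≤ n) (hnm : n ≤ m) (x : ℝ) :
    (∫ z : ℝ, F (x - 1 / (n : ℝ) - z / (n : ℝ)) * φ z)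
      ≤ ∫ z : ℝ, F (x - 1 / (m : ℝ) - z / (m : ℝ)) * φ z := by
  have hnpos : (0 : ℝ) < (n : ℝ) := Nat.cast_pos.mpr hn
  have hmpos : (0 : ℝ) < (m : ℝ) := Nat.cast_pos.mpr (le_trans hn hnm)
  have hnm' : (n : ℝ) ≤ (m : ℝ) := Nat.cast_le.mpr hnm
  refine integral_mono (integrand_integrable hφc hφsupp hF hFbd
    ((measurable_id.div_const _).const_sub _)) (integrand_integrable hφc hφsupp hF hFbd
    ((measurable_id.div_const _).const_sub _)) ?_
  intro z
  by_cases hz : z ∈ Set.Icc (-1 : ℝ) 1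
  · refine mul_le_mul_of_nonneg_right (hF ?_) (hφ0 z)
    have e1 : x - 1 / (n : ℝ) - z / (n : ℝ) = x - (1 + z) / (n : ℝ) := by ring
    have e2 : x - 1 / (m : ℝ) - z / (m : ℝ) = x - (1 + z) / (m : ℝ) := by ring
    rw [e1, e2]
    have h1z : (0 : ℝ) ≤ 1 + z := by linarith [hz.1]
    have : (1 + z) / (m : ℝ) ≤ (1 + z) / (n : ℝ) :=
      div_le_div_of_nonneg_left h1z hnpos hnm'
    linarith
  · simp [hφsupp z hz]

private lemma mollA_const (hφc : Continuous φ)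
    (hφsupp : ∀ t : ℝ, t ∉ Set.Icc (-1 : ℝ) 1 → φ t = 0) (hφint : ∫ t : ℝ, φ t = 1)
    {n : ℕ} (hn : 1 ≤ n) (c v : ℝ)
    (h : ∀ y ∈ Set.Ioo (c - 1 / (n : ℝ)) (c + 1 / (n : ℝ)), F y = v) :
    (∫ z : ℝ, F (c - z / (n : ℝ)) * φ z) = v := by
  have hnpos : (0 : ℝ) < (n : ℝ) := Nat.cast_pos.mpr hn
  have hzero := phi_zero_outside hφc hφsupp
  have h1 : ∀ z : ℝ, F (c - z / (n : ℝ)) * φ z = v * φ z := by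
    intro z
    by_cases hz : z ∈ Set.Ioo (-1 : ℝ) 1
    · rw [h _ ?_]
      constructor
      · have : z / (n : ℝ) < 1 / (n : ℝ) := by
          rw [div_eq_mul_inv, div_eq_mul_inv]
          exact mul_lt_mul_of_pos_right hz.2 (by positivity)
        linarith
      · have : (-1 : ℝ) / (n : ℝ) < z / (n : ℝ) := by
          rw [div_eq_mul_inv, div_eq_mul_inv]
          exact mul_lt_mul_of_pos_right hz.1 (by positivity)
        have h2 : (-1 : ℝ) / (n : ℝ) = -(1 / (n : ℝ)) := by ring
        linarith [h2 ▸ this]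
    · rw [hzero z hz]; ring
  simp_rw [h1]
  rw [integral_const_mul, hφint, mul_one]

private lemma moll_continuous (hφc : Continuous φ)
    (hφsupp : ∀ t : ℝ, t ∉ Set.Icc (-1 : ℝ) 1 → φ t = 0)
    (hF : Monotone F) {n : ℕ} (hn : 1 ≤ n) (s : ℝ) :
    Continuous (fun x : ℝ => ∫ y : ℝ, F (x + s - y) * ((n : ℝ) * φ ((n : ℝ) * y))) := by
  have hn1 : (1 : ℝ) ≤ (n : ℝ) := by exact_mod_cast hn
  set W : ℝ → ℝ := fun y => (n : ℝ) * φ ((n : ℝ) * y) with hW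
  set G : ℝ → ℝ := fun u => F (u + s) with hG
  have hWc : Continuous W := continuous_const.mul (hφc.comp (continuous_const.mul continuous_id))
  have hWsupp : HasCompactSupport W := by
    refine HasCompactSupport.intro (isCompact_Icc (a := (-1 : ℝ)) (b := 1)) ?_
    intro y hy
    have hy' : (n : ℝ) * y ∉ Set.Icc (-1 : ℝ) 1 := by
      simp only [Set.mem_Icc, not_and_or, not_le] at hy ⊢
      rcases hy with hy | hy
      · left; nlinarith
      · right; nlinarith
    simp [hW, hφsupp _ hy']
  have hGm : Monotone G := fun a b hab => hF (by simpa [hG] using add_le_add_right hab s)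
  have hGl : LocallyIntegrable G := hGm.locallyIntegrable
  have hc := HasCompactSupport.continuous_convolution_left
    (L := ContinuousLinearMap.mul ℝ ℝ) hWsupp hWc hGl
  have heq : (fun x : ℝ => ∫ y : ℝ, F (x + s - y) * W y)
      = (convolution W G (ContinuousLinearMap.mul ℝ ℝ) volume) := by
    funext x
    rw [convolution_def]
    congr 1
    funext y
    simp only [ContinuousLinearMap.mul_apply', hG]
    have : x - y + s = x + s - y := by ring
    rw [this, mul_comm]
  rw [show (fun x : ℝ => ∫ y : ℝ, F (x + s - y) * ((n : ℝ) * φ ((n : ℝ) * y)))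
      = (fun x : ℝ => ∫ y : ℝ, F (x + s - y) * W y) from rfl, heq]
  exact hc

end Aux

/-- Properties of the shifted mollification `h̄_n` from the proof of Lemma 3.2
(Aprox1): `f = F⁺ − F⁻` with `F⁺, F⁻` bounded nondecreasing,
`φ_δ(t) = δ⁻¹ φ(t/δ)` a mollifier, and
`h̄_n(x) = (F⁺ ∗ φ_{1/n})(x + 1/n) − (F⁻ ∗ φ_{1/n})(x − 1/n)`. -/
theorem shifted_mollification_from_above
    (Fp Fm : ℝ → ℝ)
    (hFp : Monotone Fp) (hFm : Monotone Fm)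
    (hFpbd : ∃ C : ℝ, ∀ x : ℝ, |Fp x| ≤ C)
    (hFmbd : ∃ C : ℝ, ∀ x : ℝ, |Fm x| ≤ C)
    (f : ℝ → ℝ) (hf : ∀ x : ℝ, f x = Fp x - Fm x)
    (φ : ℝ → ℝ) (hφc : Continuous φ) (hφ0 : ∀ t : ℝ, 0 ≤ φ t)
    (hφsupp : ∀ t : ℝ, t ∉ Set.Icc (-1 : ℝ) 1 → φ t = 0)
    (hφint : ∫ t : ℝ, φ t = 1)
    (hbar : ℕ → ℝ → ℝ)
    (hhbar : ∀ n : ℕ, 1 ≤ n → ∀ x : ℝ,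
      hbar n x =
        (∫ y : ℝ, Fp (x + 1 / (n : ℝ) - y) * ((n : ℝ) * φ ((n : ℝ) * y))) -
        ∫ y : ℝ, Fm (x - 1 / (n : ℝ) - y) * ((n : ℝ) * φ ((n : ℝ) * y))) :
    -- (i) continuity
    (∀ n : ℕ, 1 ≤ n → Continuous (hbar n)) ∧
    -- (ii) approximation from above
    (∀ n : ℕ, 1 ≤ n → ∀ x : ℝ, f x ≤ hbar n x) ∧
    -- (iii) monotonicity in n
    (∀ n : ℕ, 1 ≤ n → ∀ x : ℝ, hbar (n + 1) x ≤ hbar n x) ∧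
    -- (iv) convergence at common continuity points
    (∀ x : ℝ, ContinuousAt Fp x → ContinuousAt Fm x →
      Tendsto (fun n : ℕ => hbar n x) atTop (nhds (f x))) ∧
    -- (v) exactness where the one-sided pieces are constant
    (∀ n : ℕ, 1 ≤ n → ∀ x : ℝ,
      (∀ y ∈ Set.Icc x (x + 2 / (n : ℝ)), Fp y = Fp x) →
      (∀ y ∈ Set.Icc (x - 2 / (n : ℝ)) x, Fm y = Fm x) →
      hbar n x = f x) ∧
    -- (vi) one-sided monotonicity
    (∀ n : ℕ, 1 ≤ n → ∀ a b : ℝ, a < b →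
      ((∀ y ∈ Set.Ico a b, ∀ z ∈ Set.Ico a b, Fm y = Fm z) →
        a + 2 / (n : ℝ) ≤ b →
        MonotoneOn (hbar n) (Set.Icc (a + 2 / (n : ℝ)) b)) ∧
      ((∀ y ∈ Set.Ioc a b, ∀ z ∈ Set.Ioc a b, Fp y = Fp z) →
        a ≤ b - 2 / (n : ℝ) →
        AntitoneOn (hbar n) (Set.Icc a (b - 2 / (n : ℝ))))) := by
  -- the substituted ("averaged") representation
  have key : ∀ n : ℕ, 1 ≤ n → ∀ x : ℝ,
      hbar n x = (∫ z : ℝ, Fp (x + 1 / (n : ℝ) - z / (n : ℝ)) * φ z)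
        - ∫ z : ℝ, Fm (x - 1 / (n : ℝ) - z / (n : ℝ)) * φ z := by
    intro n hn x
    rw [hhbar n hn x, moll_change Fp hn (x + 1 / (n : ℝ)), moll_change Fm hn (x - 1 / (n : ℝ))]
  have hPlow : ∀ n : ℕ, 1 ≤ n → ∀ x : ℝ,
      Fp x ≤ ∫ z : ℝ, Fp (x + 1 / (n : ℝ) - z / (n : ℝ)) * φ z := by
    intro n hn x
    have h := mollA_lower hφc hφ0 hφsupp hφint hFp hFpbd hn (x + 1 / (n : ℝ))
    have e : x + 1 / (n : ℝ) - 1 / (n : ℝ) = x := by ring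
    rwa [e] at h
  have hPhigh : ∀ n : ℕ, 1 ≤ n → ∀ x : ℝ,
      (∫ z : ℝ, Fp (x + 1 / (n : ℝ) - z / (n : ℝ)) * φ z) ≤ Fp (x + 2 / (n : ℝ)) := by
    intro n hn x
    have h := mollA_upper hφc hφ0 hφsupp hφint hFp hFpbd hn (x + 1 / (n : ℝ))
    have e : x + 1 / (n : ℝ) + 1 / (n : ℝ) = x + 2 / (n : ℝ) := by ring
    rwa [e] at h
  have hMlow : ∀ n : ℕ, 1 ≤ n → ∀ x : ℝ,
      Fm (x - 2 / (n : ℝ)) ≤ ∫ z : ℝ, Fm (x - 1 / (n : ℝ) - z / (n : ℝ)) * φ z := by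
    intro n hn x
    have h := mollA_lower hφc hφ0 hφsupp hφint hFm hFmbd hn (x - 1 / (n : ℝ))
    have e : x - 1 / (n : ℝ) - 1 / (n : ℝ) = x - 2 / (n : ℝ) := by ring
    rwa [e] at h
  have hMhigh : ∀ n : ℕ, 1 ≤ n → ∀ x : ℝ,
      (∫ z : ℝ, Fm (x - 1 / (n : ℝ) - z / (n : ℝ)) * φ z) ≤ Fm x := by
    intro n hn x
    have h := mollA_upper hφc hφ0 hφsupp hφint hFm hFmbd hn (x - 1 / (n : ℝ))
    have e : x - 1 / (n : ℝ) + 1 / (n : ℝ) = x := by ring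
    rwa [e] at h
  refine ⟨?_, ?_, ?_, ?_, ?_, ?_⟩
  · -- (i) continuity
    intro n hn
    have h1 := moll_continuous hφc hφsupp hFp hn (1 / (n : ℝ))
    have h2 := moll_continuous hφc hφsupp hFm hn (-(1 / (n : ℝ)))
    have heq : hbar n = fun x : ℝ =>
        (∫ y : ℝ, Fp (x + 1 / (n : ℝ) - y) * ((n : ℝ) * φ ((n : ℝ) * y))) -
        ∫ y : ℝ, Fm (x - 1 / (n : ℝ) - y) * ((n : ℝ) * φ ((n : ℝ) * y)) :=
      funext fun x => hhbar n hn x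
    rw [heq]
    refine Continuous.sub h1 ?_
    simp only [sub_eq_add_neg] at h2 ⊢
    exact h2
  · -- (ii)
    intro n hn x
    rw [key n hn x, hf x]
    have := hPlow n hn x
    have := hMhigh n hn x
    linarith
  · -- (iii)
    intro n hn x
    rw [key n hn x, key (n + 1) (by omega) x]
    have h1 := mollA_anti_plus hφc hφ0 hφsupp hFp hFpbd hn (Nat.le_succ n) x
    have h2 := mollA_anti_minus hφc hφ0 hφsupp hFm hFmbd hn (Nat.le_succ n) x
    push_cast at h1 h2 ⊢
    linarith
  · -- (iv)
    intro x hcp hcm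
    rw [hf x]
    have hx2 : Tendsto (fun n : ℕ => x + 2 / (n : ℝ)) atTop (nhds x) := by
      have : Tendsto (fun n : ℕ => (2 : ℝ) / (n : ℝ)) atTop (nhds 0) :=
        Tendsto.div_atTop tendsto_const_nhds tendsto_natCast_atTop_atTop
      simpa using tendsto_const_nhds.add this
    have hx2' : Tendsto (fun n : ℕ => x - 2 / (n : ℝ)) atTop (nhds x) := by
      have : Tendsto (fun n : ℕ => (2 : ℝ) / (n : ℝ)) atTop (nhds 0) :=
        Tendsto.div_atTop tendsto_const_nhds tendsto_natCast_atTop_atTop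
      simpa using tendsto_const_nhds.sub this
    have hP : Tendsto (fun n : ℕ => ∫ z : ℝ, Fp (x + 1 / (n : ℝ) - z / (n : ℝ)) * φ z)
        atTop (nhds (Fp x)) := by
      refine tendsto_of_tendsto_of_tendsto_of_le_of_le' tendsto_const_nhds
        (hcp.tendsto.comp hx2) ?_ ?_
      · filter_upwards [eventually_ge_atTop 1] with n hn using hPlow n hn x
      · filter_upwards [eventually_ge_atTop 1] with n hn using hPhigh n hn x
    have hM : Tendsto (fun n : ℕ => ∫ z : ℝ, Fm (x - 1 / (n : ℝ) - z / (n : ℝ)) * φ z)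
        atTop (nhds (Fm x)) := by
      refine tendsto_of_tendsto_of_tendsto_of_le_of_le' (hcm.tendsto.comp hx2')
        tendsto_const_nhds ?_ ?_
      · filter_upwards [eventually_ge_atTop 1] with n hn using hMlow n hn x
      · filter_upwards [eventually_ge_atTop 1] with n hn using hMhigh n hn x
    refine Tendsto.congr' ?_ (hP.sub hM)
    filter_upwards [eventually_ge_atTop 1] with n hn
    exact (key n hn x).symm
  · -- (v)
    intro n hn x hp hm
    have hnpos : (0 : ℝ) < (n : ℝ) := Nat.cast_pos.mpr hn
    rw [key n hn x, hf x]
    have hP : (∫ z : ℝ, Fp (x + 1 / (n : ℝ) - z / (n : ℝ)) * φ z) = Fp x := by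
      refine mollA_const hφc hφsupp hφint hn (x + 1 / (n : ℝ)) (Fp x) ?_
      intro y hy
      refine hp y ⟨by linarith [hy.1], ?_⟩
      have : x + 1 / (n : ℝ) + 1 / (n : ℝ) = x + 2 / (n : ℝ) := by ring
      linarith [hy.2, this]
    have hM : (∫ z : ℝ, Fm (x - 1 / (n : ℝ) - z / (n : ℝ)) * φ z) = Fm x := by
      refine mollA_const hφc hφsupp hφint hn (x - 1 / (n : ℝ)) (Fm x) ?_
      intro y hy
      refine hm y ⟨?_, by linarith [hy.2]⟩
      have : x - 1 / (n : ℝ) - 1 / (n : ℝ) = x - 2 / (n : ℝ) := by ring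
      linarith [hy.1, this]
    rw [hP, hM]
  · -- (vi)
    intro n hn a b hab
    have hnpos : (0 : ℝ) < (n : ℝ) := Nat.cast_pos.mpr hn
    have h1n : (0 : ℝ) < 1 / (n : ℝ) := by positivity
    have h2n : (2 : ℝ) / (n : ℝ) = 1 / (n : ℝ) + 1 / (n : ℝ) := by ring
    constructor
    · intro hconst hle
      intro x₁ hx₁ x₂ hx₂ h12
      have hMx : ∀ x : ℝ, x ∈ Set.Icc (a + 2 / (n : ℝ)) b →
          (∫ z : ℝ, Fm (x - 1 / (n : ℝ) - z / (n : ℝ)) * φ z) = Fm a := by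
        intro x hx
        refine mollA_const hφc hφsupp hφint hn (x - 1 / (n : ℝ)) (Fm a) ?_
        intro y hy
        refine hconst y ⟨?_, ?_⟩ a ⟨le_refl a, hab⟩
        · have := hx.1; linarith [hy.1]
        · have := hx.2; linarith [hy.2]
      rw [key n hn x₁, key n hn x₂, hMx x₁ hx₁, hMx x₂ hx₂]
      have := mollA_mono hφc hφ0 hφsupp hFp hFpbd n
        (show x₁ + 1 / (n : ℝ) ≤ x₂ + 1 / (n : ℝ) by linarith)
      linarith
    · intro hconst hle
      intro x₁ hx₁ x₂ hx₂ h12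
      have hPx : ∀ x : ℝ, x ∈ Set.Icc a (b - 2 / (n : ℝ)) →
          (∫ z : ℝ, Fp (x + 1 / (n : ℝ) - z / (n : ℝ)) * φ z) = Fp b := by
        intro x hx
        refine mollA_const hφc hφsupp hφint hn (x + 1 / (n : ℝ)) (Fp b) ?_
        intro y hy
        refine hconst y ⟨?_, ?_⟩ b ⟨hab, le_refl b⟩
        · have := hx.1; linarith [hy.1]
        · have := hx.2; linarith [hy.2]
      rw [key n hn x₁, key n hn x₂, hPx x₁ hx₁, hPx x₂ hx₂]
      have := mollA_mono hφc hφ0 hφsupp hFm hFmbd n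
        (show x₁ - 1 / (n : ℝ) ≤ x₂ - 1 / (n : ℝ) by linarith)
      linarith
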